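/- Define K(r, V) = inf over all real random variables Π with E[Π] ≥ r and Var(Π) ≤ V of E[Φ(Π)], where Φ is the standard Gaussian CDF. Then for fixed V > 0, K(r, V) is strictly increasing in r. -/

import Mathlib

open MeasureTheory ProbabilityTheory

/-- Standard Gaussian density. -/
noncomputable def gaussPDF (x : ℝ) : ℝ := Real.exp (-(x ^ 2) / 2) / Real.sqrt (2 * Real.pi)

/-- Standard Gaussian CDF. -/
noncomputable def gaussCDF (x : ℝ) : ℝ := ∫ t in Set.Iic x, gaussPDF t

open Real

lemma gaussPDF_pos (x : ℝ) : 0 < gaussPDF x :=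
  div_pos (exp_pos _) (sqrt_pos.2 (by positivity))

lemma gaussPDF_anti {x y : ℝ} (h : |x| ≤ |y|) : gaussPDF y ≤ gaussPDF x := by
  unfold gaussPDF
  have hxy : x ^ 2 ≤ y ^ 2 := by
    rw [← sq_abs x, ← sq_abs y]; exact pow_le_pow_left₀ (abs_nonneg _) h 2
  gcongr


lemma integrable_gaussPDF : Integrable gaussPDF := by
  have h := (integrable_exp_neg_mul_sq (b := (1:ℝ)/2) (by norm_num)).const_mul
    (Real.sqrt (2 * Real.pi))⁻¹
  apply h.congr
  filter_upwards with x
  unfold gaussPDF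
  rw [div_eq_inv_mul]
  ring_nf

lemma integral_gaussPDF : ∫ x, gaussPDF x = 1 := by
  have h := integral_gaussian (1/2)
  unfold gaussPDF
  rw [integral_div]
  have : (fun x : ℝ => Real.exp (-(x ^ 2) / 2)) = fun x : ℝ => Real.exp (-(1/2) * x ^ 2) := by
    funext x; ring_nf
  rw [this, h]
  rw [div_eq_one_iff_eq (by positivity)]
  norm_num
  ring

lemma gaussCDF_nonneg (x : ℝ) : 0 ≤ gaussCDF x :=
  setIntegral_nonneg measurableSet_Iic fun t _ => (gaussPDF_pos t).le

lemma gaussCDF_mono : Monotone gaussCDF := fun a b hab =>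
  setIntegral_mono_set integrable_gaussPDF.integrableOn
    (ae_of_all _ fun t => (gaussPDF_pos t).le)
    (HasSubset.Subset.eventuallyLE (Set.Iic_subset_Iic.2 hab))

lemma gaussCDF_le_one (x : ℝ) : gaussCDF x ≤ 1 := by
  rw [← integral_gaussPDF]
  exact setIntegral_le_integral integrable_gaussPDF (ae_of_all _ fun t => (gaussPDF_pos t).le)

lemma measurable_gaussCDF : Measurable gaussCDF := gaussCDF_mono.measurable

lemma abs_le_max_abs {t lo hi : ℝ} (h1 : lo ≤ t) (h2 : t ≤ hi) : |t| ≤ max |lo| |hi| := by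
  rw [abs_le]
  constructor
  · calc -(max |lo| |hi|) ≤ -|lo| := by simp [le_max_left]
    _ ≤ lo := neg_abs_le lo
    _ ≤ t := h1
  · calc t ≤ hi := h2
    _ ≤ |hi| := le_abs_self hi
    _ ≤ max |lo| |hi| := le_max_right _ _

lemma gap_lemma {x δ p : ℝ} (hδ : 0 < δ) (hp : ∀ t ∈ Set.Ioc (x - δ) x, p ≤ gaussPDF t) :
    gaussCDF (x - δ) + δ * p ≤ gaussCDF x := by
  have hsplit : gaussCDF x - gaussCDF (x - δ) = ∫ t in Set.Ioc (x - δ) x, gaussPDF t := by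
    rw [gaussCDF, gaussCDF, ← Set.Iic_union_Ioc_eq_Iic (by linarith : x - δ ≤ x),
      setIntegral_union (Set.Iic_disjoint_Ioc le_rfl) measurableSet_Ioc
        integrable_gaussPDF.integrableOn integrable_gaussPDF.integrableOn]
    ring
  have h2 := setIntegral_ge_of_const_le_real (μ := volume) measurableSet_Ioc
    (by simp) hp integrable_gaussPDF.integrableOn
  rw [measureReal_def, Real.volume_Ioc] at h2
  have : x - (x - δ) = δ := by ring
  rw [this, ENNReal.toReal_ofReal hδ.le] at h2
  nlinarith [h2, hsplit]

lemma tendsto_gaussCDF : Filter.Tendsto gaussCDF Filter.atTop (nhds 1) := by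
  have h0 : Filter.Tendsto (fun b => ∫ t in (0:ℝ)..b, gaussPDF t) Filter.atTop
      (nhds (∫ t in Set.Ioi 0, gaussPDF t)) :=
    MeasureTheory.intervalIntegral_tendsto_integral_Ioi 0 integrable_gaussPDF.integrableOn
      Filter.tendsto_id
  have key : ∀ b, gaussCDF b = gaussCDF 0 + ∫ t in (0:ℝ)..b, gaussPDF t := by
    intro b
    have := intervalIntegral.integral_Iic_sub_Iic (f := gaussPDF) (μ := volume) (a := 0) (b := b)
      integrable_gaussPDF.integrableOn integrable_gaussPDF.integrableOn
    rw [gaussCDF, gaussCDF]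
    linarith [this]
  have hsum : gaussCDF 0 + ∫ t in Set.Ioi 0, gaussPDF t = 1 := by
    rw [gaussCDF, ← integral_gaussPDF, ← setIntegral_union (Set.Iic_disjoint_Ioi le_rfl)
      measurableSet_Ioi integrable_gaussPDF.integrableOn integrable_gaussPDF.integrableOn,
      Set.Iic_union_Ioi, setIntegral_univ]
  have h1 := h0.const_add (gaussCDF 0)
  rw [hsum] at h1
  exact h1.congr fun b => (key b).symm

lemma integrable_gaussCDF_comp {μ : Measure ℝ} [IsFiniteMeasure μ] {f : ℝ → ℝ}
    (hf : Measurable f) : Integrable (fun x => gaussCDF (f x)) μ := by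
  refine (integrable_const (1:ℝ)).mono' (measurable_gaussCDF.comp hf).aestronglyMeasurable ?_
  filter_upwards with x
  rw [Real.norm_eq_abs, abs_le]
  exact ⟨by linarith [gaussCDF_nonneg (f x)], gaussCDF_le_one (f x)⟩

lemma dirac_mem {r V : ℝ} (hV : 0 ≤ V) :
    gaussCDF r ∈ { e : ℝ | ∃ μ : Measure ℝ, IsProbabilityMeasure μ ∧ MemLp id 2 μ ∧
      r ≤ ∫ x, x ∂μ ∧ variance id μ ≤ V ∧ e = ∫ x, gaussCDF x ∂μ } := by
  have hae : (id : ℝ → ℝ) =ᵐ[Measure.dirac r] fun _ => r := by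
    rw [Filter.EventuallyEq, ae_dirac_eq]
    exact Filter.eventually_pure.2 rfl
  have hmem : MemLp (id : ℝ → ℝ) 2 (Measure.dirac r) :=
    (memLp_congr_ae hae).2 (memLp_const r)
  have hmean : ∫ x, x ∂(Measure.dirac r) = r := integral_dirac (fun x => x) r
  refine ⟨Measure.dirac r, inferInstance, hmem, hmean.ge, ?_, ?_⟩
  · rw [variance_eq_integral hmem.1.aemeasurable]
    rw [integral_dirac]
    simp only [Pi.pow_apply, Pi.sub_apply, id_eq]
    rw [hmean]
    simpa using hV
  · rw [integral_dirac]

lemma cheb {μ : Measure ℝ} [IsProbabilityMeasure μ] (hμ2 : MemLp id 2 μ) {C t : ℝ}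
    (hC : 0 < C) (ht : 0 ≤ t) (hvar : variance id μ / C ^ 2 ≤ t) :
    1 - t ≤ (μ {x | |x - ∫ y, y ∂μ| < C}).toReal := by
  have h := meas_ge_le_variance_div_sq hμ2 hC
  set S := {x : ℝ | |x - ∫ y, y ∂μ| < C} with hS
  have hmeas : MeasurableSet S :=
    measurableSet_lt ((measurable_id.sub_const _).abs) measurable_const
  have hSc : {ω : ℝ | C ≤ |id ω - μ[id]|} = Sᶜ := by
    ext x; simp [hS, not_lt, id]
  rw [hSc] at h
  have h1 : (μ Sᶜ).toReal ≤ t := by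
    have := ENNReal.toReal_mono ENNReal.ofReal_ne_top
      (h.trans (ENNReal.ofReal_le_ofReal hvar))
    rwa [ENNReal.toReal_ofReal ht] at this
  have h2 : (μ S).toReal + (μ Sᶜ).toReal = 1 := by
    rw [← ENNReal.toReal_add (measure_ne_top _ _) (measure_ne_top _ _),
      measure_add_measure_compl hmeas, measure_univ, ENNReal.toReal_one]
  linarith

lemma shifted_mem {r₁ δ V : ℝ} {μ : Measure ℝ} [IsProbabilityMeasure μ]
    (hμ2 : MemLp id 2 μ) (hmean : r₁ + δ ≤ ∫ x, x ∂μ) (hvar : variance id μ ≤ V) :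
    (∫ x, gaussCDF (x - δ) ∂μ) ∈ { e : ℝ | ∃ ν : Measure ℝ, IsProbabilityMeasure ν ∧
      MemLp id 2 ν ∧ r₁ ≤ ∫ x, x ∂ν ∧ variance id ν ≤ V ∧ e = ∫ x, gaussCDF x ∂ν } := by
  set φ : ℝ → ℝ := fun x => x - δ with hφdef
  have hφ : Measurable φ := measurable_id.sub_const δ
  set ν := Measure.map φ μ with hν
  have hprob : IsProbabilityMeasure ν := Measure.isProbabilityMeasure_map hφ.aemeasurable
  have hid : Integrable (id : ℝ → ℝ) μ := hμ2.integrable one_le_two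
  have hφ2 : MemLp φ 2 μ := hμ2.sub (memLp_const δ)
  have hν2 : MemLp (id : ℝ → ℝ) 2 ν := by
    rw [hν, memLp_map_measure_iff aestronglyMeasurable_id hφ.aemeasurable]
    exact hφ2
  have hmeanν : ∫ x, x ∂ν = (∫ x, x ∂μ) - δ := by
    show ∫ x, id x ∂ν = (∫ x, id x ∂μ) - δ
    rw [hν, integral_map hφ.aemeasurable aestronglyMeasurable_id]
    show ∫ x, (id x - δ) ∂μ = (∫ x, id x ∂μ) - δ
    rw [integral_sub hid (integrable_const δ), integral_const]
    simp
  have hident : IdentDistrib φ id μ ν :=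
    ⟨hφ.aemeasurable, aemeasurable_id, by rw [Measure.map_id]⟩
  have hvarν : variance id ν ≤ V := by
    have h1 : variance id ν = variance φ μ := hident.variance_eq.symm
    have hmφ : μ[φ] = μ[id] - δ := by
      show ∫ x, (id x - δ) ∂μ = (∫ x, id x ∂μ) - δ
      rw [integral_sub hid (integrable_const δ), integral_const]
      simp
    have h2 : variance φ μ = variance id μ := by
      rw [variance_eq_integral hφ2.1.aemeasurable, variance_eq_integral hμ2.1.aemeasurable, hmφ]
      congr 1
      funext x
      simp only [Pi.pow_apply, Pi.sub_apply, hφdef, id_eq]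
      ring
    rw [h1, h2]; exact hvar
  refine ⟨ν, hprob, hν2, by rw [hmeanν]; linarith, hvarν, ?_⟩
  rw [hν, integral_map hφ.aemeasurable measurable_gaussCDF.aestronglyMeasurable]

/-- `K(r, V)`: infimum of `E[Φ(Π)]` over laws `μ` of real random variables `Π`
with `E[Π] ≥ r` and `Var(Π) ≤ V`. -/
noncomputable def Kfun (r V : ℝ) : ℝ :=
  sInf { e : ℝ | ∃ μ : Measure ℝ, IsProbabilityMeasure μ ∧ MemLp id 2 μ ∧
    r ≤ ∫ x, x ∂μ ∧ variance id μ ≤ V ∧ e = ∫ x, gaussCDF x ∂μ }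

set_option maxHeartbeats 2000000 in
/-- For fixed `V > 0`, `K(r, V)` is strictly increasing in `r`. -/
theorem stmt1 {V : ℝ} (hV : 0 < V) {r₁ r₂ : ℝ} (h : r₁ < r₂) :
    Kfun r₁ V < Kfun r₂ V := by
  unfold Kfun
  set S₁ := { e : ℝ | ∃ μ : Measure ℝ, IsProbabilityMeasure μ ∧ MemLp id 2 μ ∧
    r₁ ≤ ∫ x, x ∂μ ∧ variance id μ ≤ V ∧ e = ∫ x, gaussCDF x ∂μ } with hS₁def
  set S₂ := { e : ℝ | ∃ μ : Measure ℝ, IsProbabilityMeasure μ ∧ MemLp id 2 μ ∧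
    r₂ ≤ ∫ x, x ∂μ ∧ variance id μ ≤ V ∧ e = ∫ x, gaussCDF x ∂μ } with hS₂def
  have hbdd : BddBelow S₁ := by
    refine ⟨0, fun e he => ?_⟩
    obtain ⟨μ, h1, h2, h3, h4, h5⟩ := he
    rw [h5]
    exact integral_nonneg fun x => gaussCDF_nonneg _
  set A := sInf S₁ with hAdef
  set q := gaussCDF r₁ with hqdef
  have hq0 : 0 ≤ q := gaussCDF_nonneg r₁
  have hAq : A ≤ q := csInf_le hbdd (dirac_mem hV.le)
  -- q < 1
  have hq1 : q < 1 := by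
    set R0 := max |r₁| |r₁ + 1| with hR0def
    have hR0 : 0 ≤ R0 := le_trans (abs_nonneg r₁) (le_max_left _ _)
    have hgap := gap_lemma (x := r₁ + 1) (δ := 1) (p := gaussPDF R0) one_pos ?_
    · have h1 : gaussCDF (r₁ + 1 - 1) = q := by norm_num [hqdef]
      have h2 := gaussCDF_le_one (r₁ + 1)
      have h3 := gaussPDF_pos R0
      rw [h1] at hgap
      nlinarith
    · intro s hs
      refine gaussPDF_anti ?_
      rw [abs_of_nonneg hR0]
      exact abs_le_max_abs (by linarith [hs.1]) (hs.2)
  set t := (1 - q) / 4 with htdef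
  have ht : 0 < t := by linarith
  have ht4 : t ≤ 1 / 4 := by linarith
  set C := Real.sqrt (V / t) with hCdef
  have hC : 0 < C := Real.sqrt_pos.2 (div_pos hV ht)
  have hC2 : V / C ^ 2 = t := by
    rw [hCdef, Real.sq_sqrt (le_of_lt (div_pos hV ht))]
    field_simp
  -- choose x₀ with gaussCDF x₀ ≥ 1 - t and x₀ ≥ r₂
  obtain ⟨x₀, hx₀Φ, hx₀r⟩ := ((tendsto_gaussCDF.eventually
    (eventually_ge_nhds (show 1 - t < 1 by linarith))).and
    (Filter.eventually_ge_atTop r₂)).exists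
  set M := x₀ + C with hMdef
  have hMr : r₂ ≤ M := by linarith
  set δ := r₂ - r₁ with hδdef
  have hδ : 0 < δ := by linarith
  set R := max |r₂ - C - δ| |M + C| with hRdef
  have hRnn : 0 ≤ R := le_trans (abs_nonneg _) (le_max_left _ _)
  set p := gaussPDF R with hpdef
  have hp : 0 < p := gaussPDF_pos R
  set g := δ * p with hgdef
  have hg : 0 < g := mul_pos hδ hp
  set ε := min (g / 2) ((1 - q) / 2) with hεdef
  have hε : 0 < ε := lt_min (by linarith) (by linarith)
  have key : ∀ e ∈ S₂, A + ε ≤ e := by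
    rintro e ⟨μ, hprob, hμ2, hmean, hvar, he⟩
    haveI := hprob
    set m := ∫ x, x ∂μ with hmdef
    have hvt : variance id μ / C ^ 2 ≤ t := by
      rw [← hC2]
      gcongr
    have hμS := cheb hμ2 hC ht.le hvt
    rw [← hmdef] at hμS
    set S := {x : ℝ | |x - m| < C} with hSdef
    have hSmeas : MeasurableSet S :=
      measurableSet_lt ((measurable_id.sub_const _).abs) measurable_const
    have hμS' : (1:ℝ) / 2 ≤ (μ S).toReal := by linarith
    have hint1 : Integrable (fun x => gaussCDF x) μ := integrable_gaussCDF_comp measurable_id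
    have hint2 : Integrable (fun x => gaussCDF (x - δ)) μ :=
      integrable_gaussCDF_comp (measurable_id.sub_const δ)
    by_cases hm : m ≤ M
    · -- case 1 : mean not too large, use the shift argument
      have hmem : (∫ x, gaussCDF (x - δ) ∂μ) ∈ S₁ :=
        shifted_mem hμ2 (by linarith : r₁ + δ ≤ ∫ x, x ∂μ) hvar
      have hA : A ≤ ∫ x, gaussCDF (x - δ) ∂μ := csInf_le hbdd hmem
      have gapS : ∀ x ∈ S, g ≤ gaussCDF x - gaussCDF (x - δ) := by
        intro x hx
        rw [hSdef, Set.mem_setOf_eq, abs_lt] at hx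
        have hgap := gap_lemma (x := x) (δ := δ) (p := p) hδ ?_
        · linarith
        · intro s hs
          refine gaussPDF_anti ?_
          rw [abs_of_nonneg hRnn]
          exact abs_le_max_abs (by linarith [hs.1]) (by linarith [hs.2])
      have step1 : g * (μ S).toReal ≤ ∫ x in S, (gaussCDF x - gaussCDF (x - δ)) ∂μ :=
        setIntegral_ge_of_const_le_real hSmeas (measure_ne_top μ S) gapS
          (hint1.sub hint2).integrableOn
      have step2 : ∫ x in S, (gaussCDF x - gaussCDF (x - δ)) ∂μ
          ≤ ∫ x, (gaussCDF x - gaussCDF (x - δ)) ∂μ :=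
        setIntegral_le_integral (hint1.sub hint2)
          (ae_of_all _ fun x => sub_nonneg.2 (gaussCDF_mono (by linarith)))
      have heq : ∫ x, (gaussCDF x - gaussCDF (x - δ)) ∂μ
          = e - ∫ x, gaussCDF (x - δ) ∂μ := by
        rw [integral_sub hint1 hint2, he]
      have hεg : ε ≤ g / 2 := min_le_left _ _
      nlinarith [mul_le_mul_of_nonneg_left hμS' hg.le]
    · -- case 2 : mean very large, integral is close to 1
      push_neg at hm
      have hΦS : ∀ x ∈ S, 1 - t ≤ gaussCDF x := by
        intro x hx
        rw [hSdef, Set.mem_setOf_eq, abs_lt] at hx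
        exact le_trans hx₀Φ (gaussCDF_mono (by linarith))
      have step1 : (1 - t) * (μ S).toReal ≤ ∫ x in S, gaussCDF x ∂μ :=
        setIntegral_ge_of_const_le_real hSmeas (measure_ne_top μ S) hΦS hint1.integrableOn
      have step2 : ∫ x in S, gaussCDF x ∂μ ≤ ∫ x, gaussCDF x ∂μ :=
        setIntegral_le_integral hint1 (ae_of_all _ fun x => gaussCDF_nonneg x)
      have hεq : ε ≤ (1 - q) / 2 := min_le_right _ _
      have h1t : (0:ℝ) ≤ 1 - t := by linarith
      have hprod : (1 - t) * (1 - t) ≤ (1 - t) * (μ S).toReal := mul_le_mul_of_nonneg_left (by linarith) h1t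
      rw [he]
      nlinarith [sq_nonneg t]
  have hS₂ne : S₂.Nonempty := ⟨gaussCDF r₂, dirac_mem hV.le⟩
  have : A + ε ≤ sInf S₂ := le_csInf hS₂ne key
  linarith
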